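/- Let G be the subgroup of P generated by (x,y) ↦ (−x,−y), (x,y) ↦ (y,x) and (x,y) ↦ (1/y,x), and let G' be the subgroup of P generated by (x,y) ↦ (1/x,1/y), (x,y) ↦ (y,x) and (x,y) ↦ (−x,y). Then G and G' are both isomorphic to C₂ × D₄ of order 16, and there exists h ∈ P with h·G·h⁻¹ = G'. -/

import Mathlib

noncomputable section

/-- GL₂(ℂ). -/
abbrev GL2 : Type := Matrix.GeneralLinearGroup (Fin 2) ℂ

/-- PGL₂(ℂ) = GL₂(ℂ) modulo its center. -/
abbrev PGL2 : Type := GL2 ⧸ Subgroup.center GL2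

/-- The class in PGL₂(ℂ) of a 2×2 matrix of nonzero determinant, acting as the
corresponding Möbius transformation x ↦ (ax+b)/(cx+d). -/
def pg (A : Matrix (Fin 2) (Fin 2) ℂ) (h : A.det ≠ 0) : PGL2 :=
  QuotientGroup.mk (Matrix.GeneralLinearGroup.mkOfDetNeZero A h)

/-- PGL₂(ℂ) × PGL₂(ℂ). -/
abbrev Gp : Type := PGL2 × PGL2

/-- The swap automorphism of PGL₂(ℂ) × PGL₂(ℂ). -/
def swapAut : MulAut Gp := MulEquiv.prodComm

lemma swapAut_sq : swapAut * swapAut = 1 := by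
  ext p
  · simp [swapAut, MulAut.mul_apply, MulAut.one_apply]
  · simp [swapAut, MulAut.mul_apply, MulAut.one_apply]

/-- The action of C₂ (realized as ℤˣ) on PGL₂(ℂ) × PGL₂(ℂ) whose generator swaps
the two factors. -/
def phiP : ℤˣ →* MulAut Gp where
  toFun u := if u = 1 then 1 else swapAut
  map_one' := if_pos rfl
  map_mul' := by
    intro a b
    have h1 : (-1 : ℤˣ) ≠ 1 := by decide
    rcases Int.units_eq_one_or a with ha | ha <;> rcases Int.units_eq_one_or b with hb | hb <;>
      subst ha <;> subst hb <;>
      simp [h1, swapAut_sq]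

/-- P = (PGL₂(ℂ) × PGL₂(ℂ)) ⋊ C₂, the automorphism group of ℙ¹×ℙ¹: an element
⟨(g₁,g₂), ε⟩ acts on (x,y) by first swapping the coordinates if ε = −1 and then applying
the Möbius transformations g₁, g₂ on the two factors. -/
abbrev P : Type := SemidirectProduct Gp ℤˣ phiP

/-- The coordinate swap (x,y) ↦ (y,x). -/
def σP : P := SemidirectProduct.inr (-1 : ℤˣ)

/-- The element of P acting coordinatewise by a pair of Möbius transformations. -/
def pl (g : Gp) : P := SemidirectProduct.inl g

/-- The Möbius transformation x ↦ −x. -/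
def mNeg : PGL2 := pg !![(-1 : ℂ), 0; 0, 1] (by norm_num [Matrix.det_fin_two_of])

/-- The Möbius transformation x ↦ 1/x. -/
def mInv : PGL2 := pg !![(0 : ℂ), 1; 1, 0] (by norm_num [Matrix.det_fin_two_of])

/-- The Möbius transformation x ↦ ζ₄·x, for the primitive 4th root of unity ζ₄ = i. -/
def mI : PGL2 := pg !![Complex.I, 0; 0, 1]
  (by simp [Matrix.det_fin_two_of, Complex.I_ne_zero])

/-- The Möbius transformation x ↦ (x−1)/(x+1). -/
def mU : PGL2 := pg !![(1 : ℂ), -1; 1, 1] (by norm_num [Matrix.det_fin_two_of])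

/-- G = ⟨(x,y) ↦ (−x,−y), (x,y) ↦ (y,x), (x,y) ↦ (1/y, x)⟩. -/
def G14 : Subgroup P := Subgroup.closure {pl (mNeg, mNeg), σP, pl (mInv, 1) * σP}

/-- G' = ⟨(x,y) ↦ (1/x,1/y), (x,y) ↦ (y,x), (x,y) ↦ (−x, y)⟩. -/
def G14' : Subgroup P := Subgroup.closure {pl (mInv, mInv), σP, pl (mNeg, 1)}

lemma pg_mul (A B : Matrix (Fin 2) (Fin 2) ℂ) (hA : A.det ≠ 0) (hB : B.det ≠ 0) :
    pg A hA * pg B hB = pg (A * B) (by simp [Matrix.det_mul, hA, hB]) := by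
  unfold pg
  rw [← QuotientGroup.mk_mul]
  congr 1
  ext
  rfl

lemma pg_one (h : (1 : Matrix (Fin 2) (Fin 2) ℂ).det ≠ 0) : pg 1 h = 1 := by
  have e : Matrix.GeneralLinearGroup.mkOfDetNeZero (1 : Matrix (Fin 2) (Fin 2) ℂ) h = 1 :=
    Units.ext rfl
  rw [pg, e, QuotientGroup.mk_one]

lemma central_scalar (Z : GL2) (hZ : Z ∈ Subgroup.center GL2) :
    ∃ c : ℂ, (Z : Matrix (Fin 2) (Fin 2) ℂ) = c • 1 := by
  have hD := Subgroup.mem_center_iff.mp hZ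
    (Matrix.GeneralLinearGroup.mkOfDetNeZero !![(1:ℂ),0;0,2] (by norm_num [Matrix.det_fin_two_of]))
  have hE := Subgroup.mem_center_iff.mp hZ
    (Matrix.GeneralLinearGroup.mkOfDetNeZero !![(1:ℂ),1;0,1] (by norm_num [Matrix.det_fin_two_of]))
  have hDm := congrArg (Units.val) hD
  have hEm := congrArg (Units.val) hE
  set Zm : Matrix (Fin 2) (Fin 2) ℂ := (Z : Matrix (Fin 2) (Fin 2) ℂ) with hZm
  have hDm' : !![(1:ℂ),0;0,2] * Zm = Zm * !![(1:ℂ),0;0,2] := hDm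
  have hEm' : !![(1:ℂ),1;0,1] * Zm = Zm * !![(1:ℂ),1;0,1] := hEm
  have h01 := congrFun (congrFun hDm' 0) 1
  have h10 := congrFun (congrFun hDm' 1) 0
  have h00 := congrFun (congrFun hEm' 0) 1
  simp [Matrix.mul_apply, Fin.sum_univ_two] at h01 h10 h00
  have e01 : Zm 0 1 = 0 := by linear_combination -h01
  have e10 : Zm 1 0 = 0 := by linear_combination h10
  have e11 : Zm 1 1 = Zm 0 0 := by linear_combination h00
  refine ⟨Zm 0 0, ?_⟩
  ext i j
  fin_cases i <;> fin_cases j <;>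
    simp [Matrix.one_apply, e01, e10, e11]

lemma scalar_central (c : ℂ) (hc : c ≠ 0) :
    Matrix.GeneralLinearGroup.mkOfDetNeZero (c • (1 : Matrix (Fin 2) (Fin 2) ℂ))
      (by simp [Matrix.det_smul, hc]) ∈ Subgroup.center GL2 := by
  rw [Subgroup.mem_center_iff]
  intro g
  apply Units.ext
  show (g : Matrix (Fin 2) (Fin 2) ℂ) * (c • 1) = (c • 1) * (g : Matrix (Fin 2) (Fin 2) ℂ)
  rw [mul_smul_comm, smul_mul_assoc, mul_one, one_mul]

lemma pg_eq_iff (A B : Matrix (Fin 2) (Fin 2) ℂ) (hA : A.det ≠ 0) (hB : B.det ≠ 0) :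
    pg A hA = pg B hB ↔ ∃ c : ℂ, B = c • A := by
  constructor
  · intro h
    rw [pg, pg, QuotientGroup.eq] at h
    obtain ⟨c, hc⟩ := central_scalar _ h
    refine ⟨c, ?_⟩
    have hv : ((Matrix.GeneralLinearGroup.mkOfDetNeZero A hA)⁻¹ *
        Matrix.GeneralLinearGroup.mkOfDetNeZero B hB : GL2) =
        ((Matrix.GeneralLinearGroup.mkOfDetNeZero A hA)⁻¹ *
        Matrix.GeneralLinearGroup.mkOfDetNeZero B hB : GL2) := rfl
    have : Matrix.GeneralLinearGroup.mkOfDetNeZero B hB =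
        Matrix.GeneralLinearGroup.mkOfDetNeZero A hA *
        ((Matrix.GeneralLinearGroup.mkOfDetNeZero A hA)⁻¹ *
         Matrix.GeneralLinearGroup.mkOfDetNeZero B hB) := by group
    have hval := congrArg Units.val this
    rw [Units.val_mul, hc] at hval
    simpa [mul_smul_comm] using hval
  · rintro ⟨c, rfl⟩
    have hc : c ≠ 0 := by
      intro h0
      rw [h0, zero_smul, Matrix.det_zero] at hB
      · exact hB rfl
    rw [pg, pg, QuotientGroup.eq]
    have : (Matrix.GeneralLinearGroup.mkOfDetNeZero A hA)⁻¹ *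
        Matrix.GeneralLinearGroup.mkOfDetNeZero (c • A) hB =
        Matrix.GeneralLinearGroup.mkOfDetNeZero (c • (1 : Matrix (Fin 2) (Fin 2) ℂ))
          (by simp [Matrix.det_smul, hc]) := by
      rw [inv_mul_eq_iff_eq_mul]
      apply Units.ext
      show c • A = (A : Matrix (Fin 2) (Fin 2) ℂ) * (c • 1)
      rw [mul_smul_comm, mul_one]
    rw [this]
    exact scalar_central c hc

lemma pg_congr {A B : Matrix (Fin 2) (Fin 2) ℂ} {hA : A.det ≠ 0} (h : A = B) :
    pg A hA = pg B (h ▸ hA) := by subst h; rfl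

lemma pg_ne_one (A : Matrix (Fin 2) (Fin 2) ℂ) (hA : A.det ≠ 0)
    (h : ∀ c : ℂ, (1 : Matrix (Fin 2) (Fin 2) ℂ) ≠ c • A) : pg A hA ≠ 1 := by
  intro he
  rw [show (1 : PGL2) = pg 1 (by simp) from (pg_one _).symm, pg_eq_iff] at he
  obtain ⟨c, hc⟩ := he
  exact h c hc


/-!
STATEMENT 14: G and G' are both isomorphic to C₂ × D₄ of order 16, and there exists
h ∈ P with h·G·h⁻¹ = G'.
-/
lemma hInvInv : mInv * mInv = 1 := by
  rw [mInv, pg_mul]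
  rw [pg_congr (by rw [Matrix.one_fin_two]; norm_num [Matrix.mul_fin_two] :
    !![(0 : ℂ), 1; 1, 0] * !![(0 : ℂ), 1; 1, 0] = 1)]
  exact pg_one _
lemma hNegNeg : mNeg * mNeg = 1 := by
  rw [mNeg, pg_mul]
  rw [pg_congr (by rw [Matrix.one_fin_two]; norm_num [Matrix.mul_fin_two] :
    !![(-1 : ℂ), 0; 0, 1] * !![(-1 : ℂ), 0; 0, 1] = 1)]
  exact pg_one _
lemma hNegInvComm : mNeg * mInv = mInv * mNeg := by
  rw [mNeg, mInv, pg_mul, pg_mul, pg_eq_iff]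
  refine ⟨-1, ?_⟩
  ext i j
  fin_cases i <;> fin_cases j <;>
    norm_num [Matrix.mul_fin_two]
def aP : P := pl (mNeg, mNeg)
def tP : P := pl (mInv, 1) * σP

lemma pl_mul (g h : Gp) : pl g * pl h = pl (g * h) := (map_mul SemidirectProduct.inl g h).symm
lemma pl_one : pl 1 = 1 := map_one SemidirectProduct.inl
lemma s_sq : σP * σP = 1 := by
  rw [σP, ← map_mul]
  norm_num
lemma phiP_neg (g : Gp) : phiP (-1) g = (g.2, g.1) := by
  show (if (-1 : ℤˣ) = 1 then (1 : MulAut Gp) else swapAut) g = (g.2, g.1)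
  rw [if_neg (by decide)]
  rfl
lemma s_pl (g : Gp) : σP * pl g = pl (g.2, g.1) * σP := by
  have h := SemidirectProduct.inl_aut (φ := phiP) (-1 : ℤˣ) g
  rw [phiP_neg] at h
  have : (pl (g.2, g.1) : P) = σP * pl g * σP⁻¹ := h
  rw [this]
  group
lemma pl_eq_one_iff (g : Gp) : pl g = 1 ↔ g = 1 := by
  constructor
  · intro h
    exact SemidirectProduct.inl_injective (h.trans pl_one.symm)
  · rintro rfl; exact pl_one
lemma pl_s_ne_one (g : Gp) : pl g * σP ≠ 1 := by
  intro h
  have := congrArg SemidirectProduct.rightHom h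
  simp only [map_mul, map_one, pl, σP, SemidirectProduct.rightHom_inl,
    SemidirectProduct.rightHom_inr, one_mul] at this
  exact absurd this (by decide)

lemma aP_sq : aP * aP = 1 := by
  rw [aP, pl_mul, Prod.mk_mul_mk, hNegNeg, ← pl_one]
  rfl
lemma tP_sq : tP * tP = pl (mInv, mInv) := by
  rw [tP, mul_assoc, ← mul_assoc σP, s_pl, mul_assoc, s_sq, mul_one, pl_mul]
  norm_num
lemma tP_four : tP * tP * (tP * tP) = 1 := by
  rw [tP_sq, pl_mul, Prod.mk_mul_mk, hInvInv, ← pl_one]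
  rfl
lemma s_t : σP * tP = pl (1, mInv) := by
  rw [tP, ← mul_assoc, s_pl, mul_assoc, s_sq, mul_one]
lemma t_cube : tP * tP * tP = pl (1, mInv) * σP := by
  rw [tP_sq, tP, ← mul_assoc, pl_mul, Prod.mk_mul_mk, hInvInv, mul_one]
lemma s_t_rel : σP * tP = tP * tP * tP * σP := by
  rw [t_cube, s_t, mul_assoc, s_sq, mul_one]
lemma a_s_comm : aP * σP = σP * aP := by
  rw [aP, s_pl]
lemma a_t_comm : aP * tP = tP * aP := by
  rw [aP, tP, mul_assoc, s_pl, ← mul_assoc, ← mul_assoc, pl_mul, pl_mul,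
    Prod.mk_mul_mk, Prod.mk_mul_mk, hNegInvComm, one_mul, mul_one]

lemma hNeg_ne : mNeg ≠ 1 := by
  apply pg_ne_one
  intro c hc
  have h0 := congrFun (congrFun hc 0) 0
  have h1 := congrFun (congrFun hc 1) 1
  simp [Matrix.one_apply] at h0 h1
  rw [← h1] at h0
  norm_num at h0
lemma hInv_ne : mInv ≠ 1 := by
  apply pg_ne_one
  intro c hc
  have h0 := congrFun (congrFun hc 0) 0
  simp [Matrix.one_apply] at h0
lemma hNegInv_ne : mNeg * mInv ≠ 1 := by
  rw [mNeg, mInv, pg_mul]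
  rw [pg_congr (by norm_num [Matrix.mul_fin_two] :
    !![(-1 : ℂ), 0; 0, 1] * !![(0 : ℂ), 1; 1, 0] = !![(0:ℂ), -1; 1, 0])]
  apply pg_ne_one
  intro c hc
  have h0 := congrFun (congrFun hc 0) 0
  simp [Matrix.one_apply] at h0
lemma hUNeg : mU * mNeg = mInv * mU := by
  rw [mU, mNeg, mInv, pg_mul, pg_mul, pg_eq_iff]
  refine ⟨-1, ?_⟩
  ext i j
  fin_cases i <;> fin_cases j <;>
    norm_num [Matrix.mul_fin_two]
lemma hUInv : mU * mInv = mNeg * mU := by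
  rw [mU, mInv, mNeg, pg_mul, pg_mul, pg_eq_iff]
  refine ⟨1, ?_⟩
  ext i j
  fin_cases i <;> fin_cases j <;>
    norm_num [Matrix.mul_fin_two]
lemma tP_pow4 : tP ^ 4 = 1 := by
  rw [show (4 : ℕ) = 2 * 2 from rfl, pow_mul, pow_two (tP ^ 2), pow_two tP]
  exact tP_four
lemma aP_pow2 : aP ^ 2 = 1 := by rw [pow_two]; exact aP_sq
lemma sP_pow2 : σP ^ 2 = 1 := by rw [pow_two]; exact s_sq

def T4 (i : ZMod 4) : P := tP ^ i.val
def A2 (i : ZMod 2) : P := aP ^ i.val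

lemma T4_eq {m : ℕ} {k : ZMod 4} (h : (m : ZMod 4) = k) : tP ^ m = T4 k := by
  rw [T4, pow_eq_pow_mod m tP_pow4]
  congr 1
  rw [← h, ZMod.val_natCast]
lemma A2_eq {m : ℕ} {k : ZMod 2} (h : (m : ZMod 2) = k) : aP ^ m = A2 k := by
  rw [A2, pow_eq_pow_mod m aP_pow2]
  congr 1
  rw [← h, ZMod.val_natCast]

lemma T4_add (i j : ZMod 4) : T4 (i + j) = T4 i * T4 j := by
  simp only [T4, ← pow_add]
  exact (T4_eq (by push_cast [ZMod.natCast_rightInverse i, ZMod.natCast_rightInverse j]; ring)).symm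
lemma A2_add (i j : ZMod 2) : A2 (i + j) = A2 i * A2 j := by
  simp only [A2, ← pow_add]
  exact (A2_eq (by push_cast [ZMod.natCast_rightInverse i, ZMod.natCast_rightInverse j]; ring)).symm

lemma s_t_pow (n : ℕ) : σP * tP ^ n = tP ^ (3 * n) * σP := by
  induction n with
  | zero => simp
  | succ k ih =>
    rw [pow_succ, ← mul_assoc, ih, mul_assoc, s_t_rel,
      show 3 * (k + 1) = 3 * k + 3 from by ring, pow_add,
      show (3 : ℕ) = 2 + 1 from rfl, pow_add, pow_two, pow_one]
    group
lemma s_T4 (i : ZMod 4) : σP * T4 i = T4 (-i) * σP := by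
  rw [T4, s_t_pow]
  congr 1
  exact T4_eq (by
    push_cast [ZMod.natCast_rightInverse i]
    rw [show (3 : ZMod 4) = -1 by decide]
    ring)
lemma T4_s (i : ZMod 4) : T4 i * σP = σP * T4 (-i) := by
  rw [s_T4, neg_neg]

def fD : DihedralGroup 4 →* P where
  toFun x := match x with
    | DihedralGroup.r i => T4 i
    | DihedralGroup.sr i => σP * T4 i
  map_one' := by
    show T4 0 = 1
    rw [T4]
    norm_num
  map_mul' := by
    rintro (i | i) (j | j)
    · show T4 (i + j) = T4 i * T4 j
      exact T4_add i j
    · show σP * T4 (j - i) = T4 i * (σP * T4 j)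
      rw [← mul_assoc, T4_s, mul_assoc, ← T4_add, sub_eq_neg_add]
    · show σP * T4 (i + j) = σP * T4 i * T4 j
      rw [mul_assoc, ← T4_add]
    · show T4 (j - i) = σP * T4 i * (σP * T4 j)
      rw [mul_assoc, ← mul_assoc (T4 i), T4_s, ← mul_assoc, ← mul_assoc, s_sq, one_mul,
        ← T4_add, sub_eq_neg_add]

def fA : Multiplicative (ZMod 2) →* P where
  toFun x := A2 (Multiplicative.toAdd x)
  map_one' := by
    show A2 0 = 1
    rw [A2]
    norm_num
  map_mul' := fun x y => A2_add _ _

lemma comm_fAfD : ∀ m n, Commute (fA m) (fD n) := by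
  have cat : Commute aP tP := a_t_comm
  have cas : Commute aP σP := a_s_comm
  intro m n
  apply Commute.pow_left
  rcases n with i | i
  · exact cat.pow_right _
  · exact cas.mul_right (cat.pow_right _)

def fK : Multiplicative (ZMod 2) × DihedralGroup 4 →* P :=
  MonoidHom.noncommCoprod fA fD comm_fAfD

lemma sP_ne_one : σP ≠ 1 := by
  have := pl_s_ne_one 1
  rwa [pl_one, one_mul] at this
lemma pl_ne_one_left {g1 g2 : PGL2} (h : g1 ≠ 1) : pl (g1, g2) ≠ 1 := by
  intro he
  rw [pl_eq_one_iff, Prod.mk_eq_one] at he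
  exact h he.1
lemma pl_ne_one_right {g1 g2 : PGL2} (h : g2 ≠ 1) : pl (g1, g2) ≠ 1 := by
  intro he
  rw [pl_eq_one_iff, Prod.mk_eq_one] at he
  exact h he.2
lemma sigma_t2 : σP * (tP * tP) = pl (mInv, mInv) * σP := by
  rw [tP_sq, s_pl]
lemma sigma_t3 : σP * (tP * tP * tP) = pl (mInv, 1) := by
  rw [t_cube, ← mul_assoc, s_pl, mul_assoc, s_sq, mul_one]

lemma fK_inj : Function.Injective fK := by
  rw [injective_iff_map_eq_one]
  rintro ⟨m, d⟩ h
  have hm2 : (Multiplicative.toAdd m).val < 2 := ZMod.val_lt _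
  have hmone : (Multiplicative.toAdd m).val = 0 → m = 1 := by
    intro h0
    have : Multiplicative.toAdd m = 0 := (ZMod.val_eq_zero _).mp h0
    simpa using congrArg Multiplicative.ofAdd this
  obtain hP | hP : (Multiplicative.toAdd m).val = 0 ∨ (Multiplicative.toAdd m).val = 1 := by omega
  all_goals rcases d with i | i
  all_goals have hi4 : i.val < 4 := ZMod.val_lt _
  all_goals obtain hQ | hQ | hQ | hQ :
      i.val = 0 ∨ i.val = 1 ∨ i.val = 2 ∨ i.val = 3 := by omega
  -- r cases, p = 0
  case inl.r.inl =>
    have h' : aP ^ (Multiplicative.toAdd m).val * tP ^ i.val = 1 := h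
    rw [hP, hQ, pow_zero, pow_zero, one_mul] at h'
    have hi0 : DihedralGroup.r i = (1 : DihedralGroup 4) := by
      rw [DihedralGroup.one_def]
      congr 1
      exact (ZMod.val_eq_zero _).mp hQ
    exact Prod.ext (hmone hP) hi0
  case inl.r.inr.inl =>
    have h' : aP ^ (Multiplicative.toAdd m).val * tP ^ i.val = 1 := h
    rw [hP, hQ, pow_zero, pow_one, one_mul, tP] at h'
    exact absurd h' (pl_s_ne_one _)
  case inl.r.inr.inr.inl =>
    have h' : aP ^ (Multiplicative.toAdd m).val * tP ^ i.val = 1 := h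
    rw [hP, hQ, pow_zero, one_mul, pow_two, tP_sq] at h'
    exact absurd h' (pl_ne_one_left hInv_ne)
  case inl.r.inr.inr.inr =>
    have h' : aP ^ (Multiplicative.toAdd m).val * tP ^ i.val = 1 := h
    rw [hP, hQ, pow_zero, one_mul, pow_succ, pow_two, t_cube] at h'
    exact absurd h' (pl_s_ne_one _)
  -- sr cases, p = 0
  case inl.sr.inl =>
    have h' : aP ^ (Multiplicative.toAdd m).val * (σP * tP ^ i.val) = 1 := h
    rw [hP, hQ, pow_zero, pow_zero, one_mul, mul_one] at h'
    exact absurd h' sP_ne_one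
  case inl.sr.inr.inl =>
    have h' : aP ^ (Multiplicative.toAdd m).val * (σP * tP ^ i.val) = 1 := h
    rw [hP, hQ, pow_zero, pow_one, one_mul, s_t] at h'
    exact absurd h' (pl_ne_one_right hInv_ne)
  case inl.sr.inr.inr.inl =>
    have h' : aP ^ (Multiplicative.toAdd m).val * (σP * tP ^ i.val) = 1 := h
    rw [hP, hQ, pow_zero, one_mul, pow_two, sigma_t2] at h'
    exact absurd h' (pl_s_ne_one _)
  case inl.sr.inr.inr.inr =>
    have h' : aP ^ (Multiplicative.toAdd m).val * (σP * tP ^ i.val) = 1 := h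
    rw [hP, hQ, pow_zero, one_mul, pow_succ, pow_two, sigma_t3] at h'
    exact absurd h' (pl_ne_one_left hInv_ne)
  -- r cases, p = 1
  case inr.r.inl =>
    have h' : aP ^ (Multiplicative.toAdd m).val * tP ^ i.val = 1 := h
    rw [hP, hQ, pow_zero, pow_one, mul_one, aP] at h'
    exact absurd h' (pl_ne_one_left hNeg_ne)
  case inr.r.inr.inl =>
    have h' : aP ^ (Multiplicative.toAdd m).val * tP ^ i.val = 1 := h
    rw [hP, hQ, pow_one, pow_one, aP, tP, ← mul_assoc, pl_mul, Prod.mk_mul_mk] at h'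
    exact absurd h' (pl_s_ne_one _)
  case inr.r.inr.inr.inl =>
    have h' : aP ^ (Multiplicative.toAdd m).val * tP ^ i.val = 1 := h
    rw [hP, hQ, pow_one, pow_two, tP_sq, aP, pl_mul, Prod.mk_mul_mk] at h'
    exact absurd h' (pl_ne_one_left hNegInv_ne)
  case inr.r.inr.inr.inr =>
    have h' : aP ^ (Multiplicative.toAdd m).val * tP ^ i.val = 1 := h
    rw [hP, hQ, pow_one, pow_succ, pow_two, t_cube, aP, ← mul_assoc, pl_mul, Prod.mk_mul_mk] at h'
    exact absurd h' (pl_s_ne_one _)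
  -- sr cases, p = 1
  case inr.sr.inl =>
    have h' : aP ^ (Multiplicative.toAdd m).val * (σP * tP ^ i.val) = 1 := h
    rw [hP, hQ, pow_one, pow_zero, mul_one, aP] at h'
    exact absurd h' (pl_s_ne_one _)
  case inr.sr.inr.inl =>
    have h' : aP ^ (Multiplicative.toAdd m).val * (σP * tP ^ i.val) = 1 := h
    rw [hP, hQ, pow_one, pow_one, s_t, aP, pl_mul, Prod.mk_mul_mk, mul_one] at h'
    exact absurd h' (pl_ne_one_left hNeg_ne)
  case inr.sr.inr.inr.inl =>
    have h' : aP ^ (Multiplicative.toAdd m).val * (σP * tP ^ i.val) = 1 := h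
    rw [hP, hQ, pow_one, pow_two, sigma_t2, aP, ← mul_assoc, pl_mul, Prod.mk_mul_mk] at h'
    exact absurd h' (pl_s_ne_one _)
  case inr.sr.inr.inr.inr =>
    have h' : aP ^ (Multiplicative.toAdd m).val * (σP * tP ^ i.val) = 1 := h
    rw [hP, hQ, pow_one, pow_succ, pow_two, sigma_t3, aP, pl_mul, Prod.mk_mul_mk] at h'
    exact absurd h' (pl_ne_one_left hNegInv_ne)

lemma gen_top : Subgroup.closure
    ({(Multiplicative.ofAdd (1 : ZMod 2), 1), (1, DihedralGroup.sr 0), (1, DihedralGroup.r 1)} :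
      Set (Multiplicative (ZMod 2) × DihedralGroup 4)) = ⊤ := by
  rw [eq_top_iff]
  rintro ⟨m, d⟩ -
  have hm : ((m, 1) : Multiplicative (ZMod 2) × DihedralGroup 4) ∈
      Subgroup.closure {(Multiplicative.ofAdd (1 : ZMod 2), 1), (1, DihedralGroup.sr 0),
        (1, DihedralGroup.r 1)} := by
    have he : ((m, 1) : Multiplicative (ZMod 2) × DihedralGroup 4) =
        ((Multiplicative.ofAdd (1 : ZMod 2), 1) :
          Multiplicative (ZMod 2) × DihedralGroup 4) ^ (Multiplicative.toAdd m).val := by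
      rw [Prod.pow_mk, one_pow]
      congr 1
      rw [← ofAdd_nsmul, nsmul_eq_mul, mul_one, ZMod.natCast_rightInverse (Multiplicative.toAdd m)]
      rfl
    rw [he]
    exact pow_mem (Subgroup.subset_closure (by simp)) _
  have hr : ∀ i : ZMod 4, ((1, DihedralGroup.r i) : Multiplicative (ZMod 2) × DihedralGroup 4) ∈
      Subgroup.closure {(Multiplicative.ofAdd (1 : ZMod 2), 1), (1, DihedralGroup.sr 0),
        (1, DihedralGroup.r 1)} := by
    intro i
    have he : ((1, DihedralGroup.r i) : Multiplicative (ZMod 2) × DihedralGroup 4) =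
        ((1, DihedralGroup.r 1) : Multiplicative (ZMod 2) × DihedralGroup 4) ^ i.val := by
      rw [Prod.pow_mk, one_pow, DihedralGroup.r_one_pow]
      exact congrArg (fun k => ((1, DihedralGroup.r k) : Multiplicative (ZMod 2) × DihedralGroup 4))
        (ZMod.natCast_rightInverse i).symm
    rw [he]
    exact pow_mem (Subgroup.subset_closure (by simp)) _
  have hd : ((1, d) : Multiplicative (ZMod 2) × DihedralGroup 4) ∈
      Subgroup.closure {(Multiplicative.ofAdd (1 : ZMod 2), 1), (1, DihedralGroup.sr 0),
        (1, DihedralGroup.r 1)} := by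
    rcases d with i | i
    · exact hr i
    · have he : ((1, DihedralGroup.sr i) : Multiplicative (ZMod 2) × DihedralGroup 4) =
          (1, DihedralGroup.sr 0) * (1, DihedralGroup.r i) := by
        rw [Prod.mk_mul_mk, one_mul, DihedralGroup.sr_mul_r, zero_add]
      rw [he]
      exact mul_mem (Subgroup.subset_closure (by simp)) (hr i)
  have : ((m, d) : Multiplicative (ZMod 2) × DihedralGroup 4) = (m, 1) * (1, d) := by
    rw [Prod.mk_mul_mk, mul_one, one_mul]
  rw [this]
  exact mul_mem hm hd

lemma fK_apply (m : Multiplicative (ZMod 2)) (d : DihedralGroup 4) :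
    fK (m, d) = fA m * fD d := rfl

lemma fK_range : fK.range = G14 := by
  rw [MonoidHom.range_eq_map, ← gen_top, MonoidHom.map_closure, G14]
  congr 1
  have e1 : fK (Multiplicative.ofAdd (1 : ZMod 2), 1) = pl (mNeg, mNeg) := by
    rw [fK_apply, show fD 1 = 1 from map_one fD, mul_one]
    show A2 (Multiplicative.toAdd (Multiplicative.ofAdd (1 : ZMod 2))) = pl (mNeg, mNeg)
    rw [toAdd_ofAdd, A2]
    rw [show (1 : ZMod 2).val = 1 from rfl, pow_one, aP]
  have e2 : fK (1, DihedralGroup.sr 0) = σP := by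
    rw [fK_apply, show fA 1 = 1 from map_one fA, one_mul]
    show σP * T4 0 = σP
    rw [T4, show (0 : ZMod 4).val = 0 from rfl, pow_zero, mul_one]
  have e3 : fK (1, DihedralGroup.r 1) = pl (mInv, 1) * σP := by
    rw [fK_apply, show fA 1 = 1 from map_one fA, one_mul]
    show T4 1 = pl (mInv, 1) * σP
    rw [T4, show (1 : ZMod 4).val = 1 from rfl, pow_one, tP]
  rw [Set.image_insert_eq, Set.image_insert_eq, Set.image_singleton, e1, e2, e3]

def hC : P := pl (mU, mU)

lemma conj_G14 : Subgroup.map (MulAut.conj hC).toMonoidHom G14 = G14' := by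
  rw [G14, MonoidHom.map_closure]
  have c1 : (MulAut.conj hC).toMonoidHom (pl (mNeg, mNeg)) = pl (mInv, mInv) := by
    show hC * pl (mNeg, mNeg) * hC⁻¹ = pl (mInv, mInv)
    rw [mul_inv_eq_iff_eq_mul, hC, pl_mul, pl_mul, Prod.mk_mul_mk, Prod.mk_mul_mk, hUNeg]
  have c2 : (MulAut.conj hC).toMonoidHom σP = σP := by
    show hC * σP * hC⁻¹ = σP
    rw [mul_inv_eq_iff_eq_mul, hC, s_pl]
  have c3 : (MulAut.conj hC).toMonoidHom (pl (mInv, 1) * σP) = pl (mNeg, 1) * σP := by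
    show hC * (pl (mInv, 1) * σP) * hC⁻¹ = pl (mNeg, 1) * σP
    rw [mul_inv_eq_iff_eq_mul, hC, ← mul_assoc, pl_mul, mul_assoc (pl (mNeg, 1)), s_pl,
      ← mul_assoc, pl_mul, Prod.mk_mul_mk, Prod.mk_mul_mk, hUInv, one_mul, mul_one]
  rw [Set.image_insert_eq, Set.image_insert_eq, Set.image_singleton, c1, c2, c3, G14']
  apply le_antisymm
  · rw [Subgroup.closure_le]
    intro x hx
    simp only [Set.mem_insert_iff, Set.mem_singleton_iff] at hx
    rcases hx with rfl | rfl | rfl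
    · exact Subgroup.subset_closure (by simp)
    · exact Subgroup.subset_closure (by simp)
    · exact mul_mem (Subgroup.subset_closure (by simp)) (Subgroup.subset_closure (by simp))
  · rw [Subgroup.closure_le]
    intro x hx
    simp only [Set.mem_insert_iff, Set.mem_singleton_iff] at hx
    rcases hx with rfl | rfl | rfl
    · exact Subgroup.subset_closure (by simp)
    · exact Subgroup.subset_closure (by simp)
    · have hmem : (pl (mNeg, 1) * σP) * σP ∈
          Subgroup.closure {pl (mInv, mInv), σP, pl (mNeg, 1) * σP} :=
        mul_mem (Subgroup.subset_closure (by simp)) (Subgroup.subset_closure (by simp))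
      rwa [mul_assoc, s_sq, mul_one] at hmem

theorem C2xD4_actions_conjugate' :
    Nonempty (G14 ≃* Multiplicative (ZMod 2) × DihedralGroup 4) ∧
    Nonempty (G14' ≃* Multiplicative (ZMod 2) × DihedralGroup 4) ∧
    ∃ h : P, Subgroup.map (MulAut.conj h).toMonoidHom G14 = G14' := by
  have iso1 : G14 ≃* Multiplicative (ZMod 2) × DihedralGroup 4 :=
    ((MonoidHom.ofInjective fK_inj).trans (MulEquiv.subgroupCongr fK_range)).symm
  have e : G14 ≃* Subgroup.map (MulAut.conj hC).toMonoidHom G14 :=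
    Subgroup.equivMapOfInjective G14 _ (MulAut.conj hC).injective
  have iso2 : G14' ≃* Multiplicative (ZMod 2) × DihedralGroup 4 :=
    ((e.trans (MulEquiv.subgroupCongr conj_G14)).symm.trans iso1)
  exact ⟨⟨iso1⟩, ⟨iso2⟩, ⟨hC, conj_G14⟩⟩

theorem C2xD4_actions_conjugate :
    Nonempty (G14 ≃* Multiplicative (ZMod 2) × DihedralGroup 4) ∧
    Nonempty (G14' ≃* Multiplicative (ZMod 2) × DihedralGroup 4) ∧
    ∃ h : P, Subgroup.map (MulAut.conj h).toMonoidHom G14 = G14' :=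
  C2xD4_actions_conjugate'

end
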